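/- Let N ∈ ℕ, let Lᵅⱼ : ℝᴺ → ℝ be twice continuously differentiable for α ∈ {0,1} and j ∈ {1,…,N}, let H : ℝᴺ → ℝ be twice continuously differentiable, set Kᵅᵢⱼ = ∂Lᵅⱼ/∂zⁱ − ∂Lᵅᵢ/∂zʲ, and let z : ℝ² → ℝᴺ be any three times continuously differentiable map (not assumed to solve the system). Define G_β = Σ_α ∂/∂xᵅ [ Σ_j Lᵅⱼ(z)·∂zʲ/∂xᵝ − δᵅ_β·L̃ ] with L̃ = Σ_{α,j} Lᵅⱼ(z)·∂zʲ/∂xᵅ − H(z), and Fᵅ_γβ = Σ_{i,j} Kᵅᵢⱼ(z)·(∂zⁱ/∂xᵞ)·(∂zʲ/∂xᵝ). Then the identity ∂G₁/∂x⁰ − ∂G₀/∂x¹ = Σ_α ∂Fᵅ₀₁/∂xᵅ holds at every point of ℝ². -/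

import Mathlib

open ContinuousLinearMap Finset

private lemma clm_apply_eq_sum {N : ℕ} (φ : (Fin N → ℝ) →L[ℝ] ℝ) (w : Fin N → ℝ) :
    φ w = ∑ i, w i * φ (Pi.single i 1) := by
  have hw : w = ∑ i, w i • (Pi.single i 1 : Fin N → ℝ) := by
    funext j
    simp [Finset.sum_apply, Pi.single_apply, mul_ite]
  calc φ w = φ (∑ i, w i • (Pi.single i 1 : Fin N → ℝ)) := by rw [← hw]
    _ = ∑ i, w i * φ (Pi.single i 1) := by
        rw [map_sum]; simp [smul_eq_mul]

private lemma fderiv_proj {N : ℕ} {z : (Fin 2 → ℝ) → Fin N → ℝ} (hzd : Differentiable ℝ z)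
    (q v : Fin 2 → ℝ) (j : Fin N) :
    fderiv ℝ (fun p => z p j) q v = fderiv ℝ z q v j := by
  have h : HasFDerivAt (fun p => z p j)
      ((ContinuousLinearMap.proj (R := ℝ) (φ := fun _ : Fin N => ℝ) j).comp (fderiv ℝ z q)) q := by
    exact (ContinuousLinearMap.proj (R := ℝ) (φ := fun _ : Fin N => ℝ) j).hasFDerivAt.comp q
      (hzd q).hasFDerivAt
  rw [h.fderiv]; rfl

private lemma contDiff_fderiv_z {N : ℕ} {z : (Fin 2 → ℝ) → Fin N → ℝ}
    (hz : ContDiff ℝ 3 z) (v : Fin 2 → ℝ) (j : Fin N) :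
    ContDiff ℝ 2 (fun q => fderiv ℝ z q v j) := by
  have h1 : ContDiff ℝ 2 (fderiv ℝ z) := hz.fderiv_right (le_refl (3 : WithTop ℕ∞))
  exact (((ContinuousLinearMap.proj (R := ℝ) (φ := fun _ : Fin N => ℝ) j).comp
    (ContinuousLinearMap.apply ℝ (Fin N → ℝ) v)).contDiff).comp h1

private lemma contDiff_pd {E : Type*} [NormedAddCommGroup E] [NormedSpace ℝ E] {f : E → ℝ}
    (hf : ContDiff ℝ 2 f) (v : E) : ContDiff ℝ 1 fun p => fderiv ℝ f p v :=
  ((ContinuousLinearMap.apply ℝ ℝ v).contDiff).comp (hf.fderiv_right (le_refl (2 : WithTop ℕ∞)))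

private lemma chain_pd {N : ℕ} {f : (Fin N → ℝ) → ℝ} {z : (Fin 2 → ℝ) → Fin N → ℝ}
    (hf : Differentiable ℝ f) (hzd : Differentiable ℝ z) (q v : Fin 2 → ℝ) :
    fderiv ℝ (fun p => f (z p)) q v
      = ∑ i, fderiv ℝ z q v i * fderiv ℝ f (z q) (Pi.single i 1) := by
  have h : fderiv ℝ (f ∘ z) q = (fderiv ℝ f (z q)).comp (fderiv ℝ z q) :=
    fderiv_comp q (hf (z q)) (hzd q)
  show fderiv ℝ (f ∘ z) q v = _
  rw [h, ContinuousLinearMap.comp_apply]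
  exact clm_apply_eq_sum _ _

private noncomputable def Amap {N : ℕ} (L : Fin 2 → Fin N → (Fin N → ℝ) → ℝ)
    (z : (Fin 2 → ℝ) → Fin N → ℝ) (α β : Fin 2) (q : Fin 2 → ℝ) : ℝ :=
  ∑ j, L α j (z q) * fderiv ℝ z q (Pi.single β 1) j

private lemma Amap_contDiff {N : ℕ} {L : Fin 2 → Fin N → (Fin N → ℝ) → ℝ}
    {z : (Fin 2 → ℝ) → Fin N → ℝ} (hL : ∀ α j, ContDiff ℝ 2 (L α j)) (hz : ContDiff ℝ 3 z)
    (α β : Fin 2) : ContDiff ℝ 2 (Amap L z α β) :=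
  ContDiff.sum fun j _ =>
    ((hL α j).comp (hz.of_le (by norm_num))).mul (contDiff_fderiv_z hz _ j)

private lemma Amap_pd {N : ℕ} {L : Fin 2 → Fin N → (Fin N → ℝ) → ℝ}
    {z : (Fin 2 → ℝ) → Fin N → ℝ} (hL : ∀ α j, ContDiff ℝ 2 (L α j)) (hz : ContDiff ℝ 3 z)
    (α β γ : Fin 2) (q : Fin 2 → ℝ) :
    fderiv ℝ (Amap L z α β) q (Pi.single γ 1)
      = (∑ j, (∑ i, fderiv ℝ z q (Pi.single γ 1) i * fderiv ℝ (L α j) (z q) (Pi.single i 1))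
            * fderiv ℝ z q (Pi.single β 1) j)
        + ∑ j, L α j (z q)
            * fderiv ℝ (fun p => fderiv ℝ z p (Pi.single β 1) j) q (Pi.single γ 1) := by
  have hzd : Differentiable ℝ z := hz.differentiable (by norm_num)
  have hc : ∀ j : Fin N, DifferentiableAt ℝ (fun p => L α j (z p)) q := fun j =>
    (((hL α j).comp (hz.of_le (by norm_num))).differentiable (by norm_num)) q
  have hd : ∀ j : Fin N, DifferentiableAt ℝ
      (fun p => fderiv ℝ z p (Pi.single β 1) j) q := fun j =>
    ((contDiff_fderiv_z hz _ j).differentiable (by norm_num)) q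
  have h1 : fderiv ℝ (fun p => ∑ j, L α j (z p) * fderiv ℝ z p (Pi.single β 1) j) q
      = ∑ j, fderiv ℝ (fun p => L α j (z p) * fderiv ℝ z p (Pi.single β 1) j) q :=
    fderiv_fun_sum fun j _ => (hc j).mul (hd j)
  have h2 : ∀ j : Fin N,
      fderiv ℝ (fun p => L α j (z p) * fderiv ℝ z p (Pi.single β 1) j) q (Pi.single γ 1)
        = L α j (z q) * fderiv ℝ (fun p => fderiv ℝ z p (Pi.single β 1) j) q (Pi.single γ 1)
          + fderiv ℝ z q (Pi.single β 1) j
            * (∑ i, fderiv ℝ z q (Pi.single γ 1) i * fderiv ℝ (L α j) (z q) (Pi.single i 1)) := by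
    intro j
    rw [fderiv_fun_mul (hc j) (hd j), ContinuousLinearMap.add_apply,
      ContinuousLinearMap.smul_apply, ContinuousLinearMap.smul_apply, smul_eq_mul, smul_eq_mul,
      chain_pd ((hL α j).differentiable (by norm_num)) hzd]
  rw [show (Amap L z α β)
      = (fun p => ∑ j, L α j (z p) * fderiv ℝ z p (Pi.single β 1) j) from rfl,
    h1, ContinuousLinearMap.sum_apply,
    Finset.sum_congr rfl (fun j _ => h2 j), Finset.sum_add_distrib, add_comm]
  congr 1
  exact Finset.sum_congr rfl fun j _ => by ring

private lemma pd_eq_snd {E : Type*} [NormedAddCommGroup E] [NormedSpace ℝ E] {f : E → ℝ}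
    (hd : Differentiable ℝ (fderiv ℝ f)) (q v w : E) :
    fderiv ℝ (fun p => fderiv ℝ f p v) q w = fderiv ℝ (fderiv ℝ f) q w v := by
  rw [fderiv_clm_apply (hd q) (differentiableAt_const v)]
  simp

private lemma sym2 {E : Type*} [NormedAddCommGroup E] [NormedSpace ℝ E] {f : E → ℝ}
    (hf : ContDiff ℝ 2 f) (q v w : E) :
    fderiv ℝ (fun p => fderiv ℝ f p v) q w = fderiv ℝ (fun p => fderiv ℝ f p w) q v := by
  have hd : Differentiable ℝ (fderiv ℝ f) :=
    (hf.fderiv_right (m := 1) (le_refl (2 : WithTop ℕ∞))).differentiable (by norm_num)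
  rw [pd_eq_snd hd, pd_eq_snd hd]
  exact (hf.contDiffAt.isSymmSndFDerivAt (by simp [minSmoothness_of_isRCLikeNormedField])) w v

private lemma flux_eq {N : ℕ} {L : Fin 2 → Fin N → (Fin N → ℝ) → ℝ}
    {z : (Fin 2 → ℝ) → Fin N → ℝ} (hL : ∀ α j, ContDiff ℝ 2 (L α j)) (hz : ContDiff ℝ 3 z)
    (α : Fin 2) (q : Fin 2 → ℝ) :
    (∑ i, ∑ j, (fderiv ℝ (L α j) (z q) (Pi.single i 1)
        - fderiv ℝ (L α i) (z q) (Pi.single j 1))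
      * fderiv ℝ z q (Pi.single 0 1) i * fderiv ℝ z q (Pi.single 1 1) j)
    = fderiv ℝ (Amap L z α 1) q (Pi.single 0 1)
      - fderiv ℝ (Amap L z α 0) q (Pi.single 1 1) := by
  have hzd : Differentiable ℝ z := hz.differentiable (by norm_num)
  have hsymm : ∀ j : Fin N,
      fderiv ℝ (fun p => fderiv ℝ z p (Pi.single (1 : Fin 2) 1) j) q (Pi.single (0 : Fin 2) 1)
        = fderiv ℝ (fun p => fderiv ℝ z p (Pi.single (0 : Fin 2) 1) j) q
            (Pi.single (1 : Fin 2) 1) := by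
    intro j
    have hzj : ContDiff ℝ 2 (fun p => z p j) :=
      ((ContinuousLinearMap.proj (R := ℝ) (φ := fun _ : Fin N => ℝ) j).contDiff).comp
        (hz.of_le (by norm_num))
    have e : ∀ v : Fin 2 → ℝ,
        (fun p => fderiv ℝ z p v j) = fun p => fderiv ℝ (fun y => z y j) p v :=
      fun v => funext fun p => (fderiv_proj hzd p v j).symm
    rw [e, e]
    exact sym2 hzj q _ _
  have hT : (∑ j, L α j (z q)
        * fderiv ℝ (fun p => fderiv ℝ z p (Pi.single (1 : Fin 2) 1) j) q (Pi.single 0 1))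
      = ∑ j, L α j (z q)
        * fderiv ℝ (fun p => fderiv ℝ z p (Pi.single (0 : Fin 2) 1) j) q (Pi.single 1 1) :=
    Finset.sum_congr rfl fun j _ => by rw [hsymm j]
  have hX : (∑ j, (∑ i, fderiv ℝ z q (Pi.single 0 1) i
          * fderiv ℝ (L α j) (z q) (Pi.single i 1)) * fderiv ℝ z q (Pi.single 1 1) j)
      = ∑ i, ∑ j, fderiv ℝ (L α j) (z q) (Pi.single i 1)
          * fderiv ℝ z q (Pi.single 0 1) i * fderiv ℝ z q (Pi.single 1 1) j :=
    calc _ = ∑ j, ∑ i, fderiv ℝ z q (Pi.single 0 1) i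
            * fderiv ℝ (L α j) (z q) (Pi.single i 1) * fderiv ℝ z q (Pi.single 1 1) j :=
          Finset.sum_congr rfl fun j _ => Finset.sum_mul ..
      _ = ∑ i, ∑ j, fderiv ℝ z q (Pi.single 0 1) i
            * fderiv ℝ (L α j) (z q) (Pi.single i 1) * fderiv ℝ z q (Pi.single 1 1) j :=
          Finset.sum_comm
      _ = _ := Finset.sum_congr rfl fun i _ => Finset.sum_congr rfl fun j _ => by ring
  have hY : (∑ j, (∑ i, fderiv ℝ z q (Pi.single 1 1) i
          * fderiv ℝ (L α j) (z q) (Pi.single i 1)) * fderiv ℝ z q (Pi.single 0 1) j)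
      = ∑ i, ∑ j, fderiv ℝ (L α i) (z q) (Pi.single j 1)
          * fderiv ℝ z q (Pi.single 0 1) i * fderiv ℝ z q (Pi.single 1 1) j :=
    calc _ = ∑ j, ∑ i, fderiv ℝ z q (Pi.single 1 1) i
            * fderiv ℝ (L α j) (z q) (Pi.single i 1) * fderiv ℝ z q (Pi.single 0 1) j :=
          Finset.sum_congr rfl fun j _ => Finset.sum_mul ..
      _ = _ := Finset.sum_congr rfl fun i _ => Finset.sum_congr rfl fun j _ => by ring
  calc (∑ i, ∑ j, (fderiv ℝ (L α j) (z q) (Pi.single i 1)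
          - fderiv ℝ (L α i) (z q) (Pi.single j 1))
        * fderiv ℝ z q (Pi.single 0 1) i * fderiv ℝ z q (Pi.single 1 1) j)
      = (∑ i, ∑ j, fderiv ℝ (L α j) (z q) (Pi.single i 1)
            * fderiv ℝ z q (Pi.single 0 1) i * fderiv ℝ z q (Pi.single 1 1) j)
        - ∑ i, ∑ j, fderiv ℝ (L α i) (z q) (Pi.single j 1)
            * fderiv ℝ z q (Pi.single 0 1) i * fderiv ℝ z q (Pi.single 1 1) j := by
        simp only [sub_mul, Finset.sum_sub_distrib]
    _ = ((∑ j, (∑ i, fderiv ℝ z q (Pi.single 0 1) i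
              * fderiv ℝ (L α j) (z q) (Pi.single i 1)) * fderiv ℝ z q (Pi.single 1 1) j)
          + ∑ j, L α j (z q)
              * fderiv ℝ (fun p => fderiv ℝ z p (Pi.single (0 : Fin 2) 1) j) q (Pi.single 1 1))
        - ((∑ j, (∑ i, fderiv ℝ z q (Pi.single 1 1) i
              * fderiv ℝ (L α j) (z q) (Pi.single i 1)) * fderiv ℝ z q (Pi.single 0 1) j)
          + ∑ j, L α j (z q)
              * fderiv ℝ (fun p => fderiv ℝ z p (Pi.single (0 : Fin 2) 1) j) q (Pi.single 1 1)) := by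
        rw [hX, hY]; ring
    _ = fderiv ℝ (Amap L z α 1) q (Pi.single 0 1)
        - fderiv ℝ (Amap L z α 0) q (Pi.single 1 1) := by
        rw [Amap_pd hL hz α 1 0 q, Amap_pd hL hz α 0 1 q, hT]

/-- For an arbitrary (not necessarily solution) `C³` map `z`, the pullback
expressions `G_β` and the symplecticity fluxes `Fᵅ₀₁` satisfy the identity
`∂G₁/∂x⁰ - ∂G₀/∂x¹ = Σ_α ∂Fᵅ₀₁/∂xᵅ`. -/
theorem pullback_symplecticity_compatibility
    (N : ℕ)
    (L : Fin 2 → Fin N → (Fin N → ℝ) → ℝ)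
    (hL : ∀ α j, ContDiff ℝ 2 (L α j))
    (H : (Fin N → ℝ) → ℝ) (hH : ContDiff ℝ 2 H)
    (K : Fin 2 → Fin N → Fin N → (Fin N → ℝ) → ℝ)
    (hK : ∀ α i j v, K α i j v
      = fderiv ℝ (L α j) v (Pi.single i 1) - fderiv ℝ (L α i) v (Pi.single j 1))
    (z : (Fin 2 → ℝ) → (Fin N → ℝ)) (hz : ContDiff ℝ 3 z)
    (Lt : (Fin 2 → ℝ) → ℝ)
    (hLt : ∀ q, Lt q
      = (∑ α : Fin 2, ∑ j : Fin N, L α j (z q) * fderiv ℝ z q (Pi.single α 1) j)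
        - H (z q))
    (G : Fin 2 → (Fin 2 → ℝ) → ℝ)
    (hG : ∀ (β : Fin 2) (q : Fin 2 → ℝ), G β q
      = ∑ α : Fin 2,
          fderiv ℝ (fun q' =>
              (∑ j : Fin N, L α j (z q') * fderiv ℝ z q' (Pi.single β 1) j)
                - (if α = β then Lt q' else 0)) q (Pi.single α 1))
    (F : Fin 2 → (Fin 2 → ℝ) → ℝ)
    (hF : ∀ (α : Fin 2) (q : Fin 2 → ℝ), F α q
      = ∑ i : Fin N, ∑ j : Fin N,
          K α i j (z q) * fderiv ℝ z q (Pi.single 0 1) i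
            * fderiv ℝ z q (Pi.single 1 1) j) :
    ∀ q : Fin 2 → ℝ,
      fderiv ℝ (G 1) q (Pi.single 0 1) - fderiv ℝ (G 0) q (Pi.single 1 1)
        = ∑ α : Fin 2, fderiv ℝ (F α) q (Pi.single α 1) := by
  have hA : ∀ α β, ContDiff ℝ 2 (Amap L z α β) := Amap_contDiff hL hz
  have hHz : ContDiff ℝ 2 fun p => H (z p) := hH.comp (hz.of_le (by norm_num))
  have hLtf : Lt = fun p => Amap L z 0 0 p + Amap L z 1 1 p - H (z p) := by
    funext p
    rw [hLt p, Fin.sum_univ_two]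
    rfl
  have hLtc : ContDiff ℝ 2 Lt := by
    rw [hLtf]; exact ((hA 0 0).add (hA 1 1)).sub hHz
  have key : ∀ (α β : Fin 2) (q : Fin 2 → ℝ),
      fderiv ℝ (fun q' =>
          (∑ j : Fin N, L α j (z q') * fderiv ℝ z q' (Pi.single β 1) j)
            - (if α = β then Lt q' else 0)) q (Pi.single α 1)
        = fderiv ℝ (Amap L z α β) q (Pi.single α 1)
          - (if α = β then fderiv ℝ Lt q (Pi.single α 1) else 0) := by
    intro α β q
    by_cases h : α = β
    · have e : (fun q' =>
          (∑ j : Fin N, L α j (z q') * fderiv ℝ z q' (Pi.single β 1) j)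
            - (if α = β then Lt q' else 0)) = fun q' => Amap L z α β q' - Lt q' := by
        funext q'; rw [if_pos h]; rfl
      rw [e, fderiv_fun_sub ((hA α β).differentiable (by norm_num) q)
        (hLtc.differentiable (by norm_num) q), if_pos h, ContinuousLinearMap.sub_apply]
    · have e : (fun q' =>
          (∑ j : Fin N, L α j (z q') * fderiv ℝ z q' (Pi.single β 1) j)
            - (if α = β then Lt q' else 0)) = Amap L z α β := by
        funext q'; rw [if_neg h, sub_zero]; rfl
      rw [e, if_neg h, sub_zero]
  have hG1 : G 1 = fun q => fderiv ℝ (Amap L z 0 1) q (Pi.single 0 1)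
      + fderiv ℝ (Amap L z 1 1) q (Pi.single 1 1) - fderiv ℝ Lt q (Pi.single 1 1) := by
    funext q
    rw [hG 1 q, Fin.sum_univ_two, key 0 1 q, key 1 1 q,
      if_neg (by decide : ¬(0 : Fin 2) = 1), if_pos rfl]
    ring
  have hG0 : G 0 = fun q => fderiv ℝ (Amap L z 0 0) q (Pi.single 0 1)
      + fderiv ℝ (Amap L z 1 0) q (Pi.single 1 1) - fderiv ℝ Lt q (Pi.single 0 1) := by
    funext q
    rw [hG 0 q, Fin.sum_univ_two, key 0 0 q, key 1 0 q,
      if_pos rfl, if_neg (by decide : ¬(1 : Fin 2) = 0)]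
    ring
  have hFf : ∀ α, F α = fun q => fderiv ℝ (Amap L z α 1) q (Pi.single 0 1)
      - fderiv ℝ (Amap L z α 0) q (Pi.single 1 1) := by
    intro α; funext q
    rw [hF α q]
    simp only [hK]
    exact flux_eq hL hz α q
  intro q
  have dA : ∀ (α β : Fin 2) (v : Fin 2 → ℝ),
      DifferentiableAt ℝ (fun p => fderiv ℝ (Amap L z α β) p v) q := fun α β v =>
    (contDiff_pd (hA α β) v).differentiable (by norm_num) q
  have dLt : ∀ v : Fin 2 → ℝ, DifferentiableAt ℝ (fun p => fderiv ℝ Lt p v) q :=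
    fun v => (contDiff_pd hLtc v).differentiable (by norm_num) q
  have drule3 : ∀ (f1 f2 f3 : (Fin 2 → ℝ) → ℝ) (v : Fin 2 → ℝ),
      DifferentiableAt ℝ f1 q → DifferentiableAt ℝ f2 q → DifferentiableAt ℝ f3 q →
      fderiv ℝ (fun p => f1 p + f2 p - f3 p) q v
        = fderiv ℝ f1 q v + fderiv ℝ f2 q v - fderiv ℝ f3 q v := by
    intro f1 f2 f3 v h1 h2 h3
    rw [fderiv_fun_sub (f := fun p => f1 p + f2 p) (h1.add h2) h3, fderiv_fun_add h1 h2, ContinuousLinearMap.sub_apply,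
      ContinuousLinearMap.add_apply]
  have drule2 : ∀ (f1 f2 : (Fin 2 → ℝ) → ℝ) (v : Fin 2 → ℝ),
      DifferentiableAt ℝ f1 q → DifferentiableAt ℝ f2 q →
      fderiv ℝ (fun p => f1 p - f2 p) q v = fderiv ℝ f1 q v - fderiv ℝ f2 q v := by
    intro f1 f2 v h1 h2
    rw [fderiv_fun_sub h1 h2, ContinuousLinearMap.sub_apply]
  rw [hG1, hG0, Fin.sum_univ_two, hFf 0, hFf 1,
    drule3 _ _ _ _ (dA 0 1 _) (dA 1 1 _) (dLt _),
    drule3 _ _ _ _ (dA 0 0 _) (dA 1 0 _) (dLt _),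
    drule2 _ _ _ (dA 0 1 _) (dA 0 0 _),
    drule2 _ _ _ (dA 1 1 _) (dA 1 0 _)]
  rw [sym2 (hA 0 0) q (Pi.single 0 1) (Pi.single 1 1),
    sym2 (hA 1 1) q (Pi.single 1 1) (Pi.single 0 1),
    sym2 hLtc q (Pi.single 1 1) (Pi.single 0 1)]
  ring
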